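/- arXiv:2012.14932 — 3 statements merged into one kernel-verified Lean document; each statement's English description precedes it below -/
import Mathlib

section
/- There exists an absolute constant c > 0 such that the following holds. Let k ≥ 2 and n be positive integers, let θ_{l,i} for 1 ≤ l ≤ k, 1 ≤ i ≤ n be i.i.d. random variables uniformly distributed on [0,2π), and define random vectors z_l ∈ ℂ^n by z_{l,i} = e^{ιθ_{l,i}}/√n. Then for every δ ∈ (0,1), if n ≥ 4 log k/(cδ²), the vectors z_1,…,z_k are δ-orthogonal with probability at least 1 − exp(−cδ²n/2). -/
open MeasureTheory ProbabilityTheory Complex Matrix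
open scoped BigOperators ENNReal

noncomputable section

/-- The standard Hermitian inner product on `ℂ^n`. -/
def hInner {n : ℕ} (x y : Fin n → ℂ) : ℂ := ∑ i, (starRingEnd ℂ) (x i) * y i

/-- The `ℓ₂` norm on `ℂ^n`. -/
def hNorm {n : ℕ} (x : Fin n → ℂ) : ℝ := Real.sqrt (∑ i, ‖x i‖ ^ 2)

/-- A family of vectors in `ℂ^n` is `δ`-orthogonal if all distinct pairs have inner
product bounded by `δ` times the product of the norms. -/
def DeltaOrth {n : ℕ} {ι : Type*} (z : ι → (Fin n → ℂ)) (δ : ℝ) : Prop :=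
  ∀ i j, i ≠ j → ‖hInner (z i) (z j)‖ ≤ δ * hNorm (z i) * hNorm (z j)

/-- The uniform probability distribution on `[0, 2π)`. -/
def uniformAngle : Measure ℝ :=
  (ENNReal.ofReal (2 * Real.pi))⁻¹ • volume.restrict (Set.Ico 0 (2 * Real.pi))

lemma pair_iIndep {Ω : Type*} [MeasureSpace Ω] {k n : ℕ}
    (θ : Fin k → Fin n → Ω → ℝ) (hmeas : ∀ l i, Measurable (θ l i))
    (hind : iIndepFun (fun q : Fin k × Fin n => θ q.1 q.2) ℙ)
    {l l' : Fin k} (hll' : l ≠ l') :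
    iIndepFun
      (fun (i : Fin n) (ω : Ω) => (θ l i ω, θ l' i ω)) ℙ := by
  classical
  set g : Fin n → Ω → ℝ × ℝ := fun i ω => (θ l i ω, θ l' i ω) with hg
  have hgmeas : ∀ i, Measurable (g i) := fun i => (hmeas l i).prodMk (hmeas l' i)
  set π : Fin n → Set (Set Ω) := fun i =>
    {s | ∃ A B : Set ℝ, MeasurableSet A ∧ MeasurableSet B ∧
      s = θ l i ⁻¹' A ∩ θ l' i ⁻¹' B} with hπ
  rw [iIndepFun_iff_iIndep]
  refine iIndepSets.iIndep (fun i => (hgmeas i).comap_le) π ?_ ?_ ?_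
  · -- pi-system
    rintro i s ⟨A, B, hA, hB, rfl⟩ t ⟨A', B', hA', hB', rfl⟩ -
    exact ⟨A ∩ A', B ∩ B', hA.inter hA', hB.inter hB', by
      simp [Set.preimage_inter]; ext ω; simp; tauto⟩
  · -- generateFrom
    intro i
    rw [← generateFrom_prod, MeasurableSpace.comap_generateFrom]
    congr 1
    ext s
    constructor
    · rintro ⟨u, ⟨A, hA, B, hB, rfl⟩, rfl⟩
      exact ⟨A, B, hA, hB, by ext ω; simp [g]⟩
    · rintro ⟨A, B, hA, hB, rfl⟩
      exact ⟨A ×ˢ B, ⟨A, hA, B, hB, rfl⟩, by ext ω; simp [g]⟩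
  · -- iIndepSets
    rw [iIndepSets_iff]
    intro S s hs
    have hch : ∀ i ∈ S, ∃ A B : Set ℝ, MeasurableSet A ∧ MeasurableSet B ∧
        s i = θ l i ⁻¹' A ∩ θ l' i ⁻¹' B := hs
    choose! A B hA hB hsi using hch
    set sets : Fin k × Fin n → Set ℝ := fun q =>
      if q.1 = l ∧ q.2 ∈ S then A q.2 else if q.1 = l' ∧ q.2 ∈ S then B q.2 else Set.univ
      with hsets
    have hmeas_sets : ∀ q, MeasurableSet (sets q) := by
      intro q
      by_cases h1 : q.1 = l ∧ q.2 ∈ S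
      · simpa [sets, h1] using hA _ h1.2
      by_cases h2 : q.1 = l' ∧ q.2 ∈ S
      · simpa [sets, h1, h2, Ne.symm hll'] using hB _ h2.2
      · simp [sets, h1, h2]
    set S' : Finset (Fin k × Fin n) :=
      S.image (fun i => (l, i)) ∪ S.image (fun i => (l', i)) with hS'
    have hdisj : Disjoint (S.image (fun i => (l, i))) (S.image (fun i => (l', i))) := by
      simp only [Finset.disjoint_left, Finset.mem_image]
      rintro ⟨a, b⟩ ⟨i, hi, h⟩ ⟨j, hj, h'⟩
      cases h; cases h'; exact hll' rfl
    have hinj1 : Set.InjOn (fun i : Fin n => ((l, i) : Fin k × Fin n)) S := by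
      intro a _ b _ h; simpa using h
    have hinj2 : Set.InjOn (fun i : Fin n => ((l', i) : Fin k × Fin n)) S := by
      intro a _ b _ h; simpa using h
    have key := hind.measure_inter_preimage_eq_mul S' (fun q _ => hmeas_sets q)
    have hsets1 : ∀ i ∈ S, sets (l, i) = A i := by
      intro i hi; simp [sets, hi]
    have hsets2 : ∀ i ∈ S, sets (l', i) = B i := by
      intro i hi; simp [sets, Ne.symm hll', hi, hll']
    have hInter : (⋂ q ∈ S', (fun ω => θ q.1 q.2 ω) ⁻¹' sets q) = ⋂ i ∈ S, s i := by
      rw [hS']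
      ext ω
      simp only [Finset.mem_union, Finset.mem_image, Set.mem_iInter, Set.mem_preimage]
      constructor
      · intro h i hi
        rw [hsi i hi]
        refine ⟨?_, ?_⟩
        · have := h (l, i) (Or.inl ⟨i, hi, rfl⟩); rwa [hsets1 i hi] at this
        · have := h (l', i) (Or.inr ⟨i, hi, rfl⟩); rwa [hsets2 i hi] at this
      · rintro h q (⟨i, hi, rfl⟩ | ⟨i, hi, rfl⟩)
        · have := h i hi; rw [hsi i hi] at this
          rw [hsets1 i hi]; exact this.1
        · have := h i hi; rw [hsi i hi] at this
          rw [hsets2 i hi]; exact this.2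
    have hProd : (∏ q ∈ S', ℙ ((fun ω => θ q.1 q.2 ω) ⁻¹' sets q))
        = ∏ i ∈ S, (ℙ (θ l i ⁻¹' A i) * ℙ (θ l' i ⁻¹' B i)) := by
      rw [hS', Finset.prod_union hdisj, Finset.prod_image (fun a ha b hb => hinj1 ha hb),
        Finset.prod_image (fun a ha b hb => hinj2 ha hb), ← Finset.prod_mul_distrib]
      refine Finset.prod_congr rfl fun i hi => ?_
      rw [hsets1 i hi, hsets2 i hi]
    have hpair : ∀ i ∈ S, ℙ (s i) = ℙ (θ l i ⁻¹' A i) * ℙ (θ l' i ⁻¹' B i) := by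
      intro i hi
      have hne : ((l, i) : Fin k × Fin n) ≠ (l', i) := by simp [hll']
      have hIF : IndepFun (θ l i) (θ l' i) ℙ := hind.indepFun hne
      rw [hsi i hi]
      exact hIF.measure_inter_preimage_eq_mul _ _ (hA i hi) (hB i hi)
    calc ℙ (⋂ i ∈ S, s i) = ℙ (⋂ q ∈ S', (fun ω => θ q.1 q.2 ω) ⁻¹' sets q) := by rw [hInter]
      _ = ∏ q ∈ S', ℙ ((fun ω => θ q.1 q.2 ω) ⁻¹' sets q) := key
      _ = ∏ i ∈ S, (ℙ (θ l i ⁻¹' A i) * ℙ (θ l' i ⁻¹' B i)) := hProd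
      _ = ∏ i ∈ S, ℙ (s i) := by
          refine Finset.prod_congr rfl fun i hi => (hpair i hi).symm

lemma exp_mul_le_cosh (t x : ℝ) (hx : |x| ≤ 1) :
    Real.exp (t * x) ≤ Real.cosh t + x * Real.sinh t := by
  obtain ⟨h1, h2⟩ := abs_le.1 hx
  have h := convexOn_exp.2 (Set.mem_univ (-t)) (Set.mem_univ t)
    (by linarith : (0:ℝ) ≤ (1 - x)/2) (by linarith : (0:ℝ) ≤ (1+x)/2) (by ring)
  rw [smul_eq_mul, smul_eq_mul, smul_eq_mul, smul_eq_mul] at h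
  calc Real.exp (t*x) = Real.exp ((1-x)/2 * (-t) + (1+x)/2 * t) := by ring_nf
    _ ≤ (1-x)/2 * Real.exp (-t) + (1+x)/2 * Real.exp t := h
    _ = Real.cosh t + x * Real.sinh t := by rw [Real.cosh_eq, Real.sinh_eq]; ring

lemma chernoff {Ω : Type*} [MeasureSpace Ω] [IsProbabilityMeasure (ℙ : Measure Ω)]
    {n : ℕ} (Y : Fin n → Ω → ℝ) (hmeas : ∀ i, Measurable (Y i))
    (hind : iIndepFun Y ℙ)
    (hbdd : ∀ i ω, |Y i ω| ≤ 1) (hmean : ∀ i, ∫ ω, Y i ω ∂ℙ = 0)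
    {a : ℝ} (ha : 0 < a) (hn : 0 < n) :
    ℙ {ω | a ≤ ∑ i, Y i ω} ≤ ENNReal.ofReal (Real.exp (-a^2/(2*n))) := by
  have hn' : (0:ℝ) < n := Nat.cast_pos.2 hn
  set t : ℝ := a / n with hT
  have ht : 0 ≤ t := le_of_lt (div_pos ha hn')
  have hYint : ∀ i, Integrable (Y i) ℙ := by
    intro i
    refine Integrable.mono' (integrable_const 1) (hmeas i).aestronglyMeasurable ?_
    exact Filter.Eventually.of_forall fun ω => by simpa using hbdd i ω
  have hint : ∀ i, Integrable (fun ω => Real.exp (t * Y i ω)) ℙ := by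
    intro i
    refine Integrable.mono' (integrable_const (Real.exp |t|))
      ((hmeas i).const_mul t).exp.aestronglyMeasurable ?_
    refine Filter.Eventually.of_forall fun ω => ?_
    rw [Real.norm_eq_abs, Real.abs_exp, Real.exp_le_exp]
    calc t * Y i ω ≤ |t * Y i ω| := le_abs_self _
      _ = |t| * |Y i ω| := abs_mul _ _
      _ ≤ |t| * 1 := by gcongr; exact hbdd i ω
      _ = |t| := mul_one _
  have hmgf : ∀ i, mgf (Y i) ℙ t ≤ Real.cosh t := by
    intro i
    have : mgf (Y i) ℙ t ≤ ∫ ω, (Real.cosh t + Y i ω * Real.sinh t) ∂ℙ := by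
      refine integral_mono (hint i) ((integrable_const _).add ((hYint i).mul_const _)) ?_
      intro ω; exact exp_mul_le_cosh t (Y i ω) (hbdd i ω)
    rwa [integral_add (integrable_const _) ((hYint i).mul_const _),
      integral_const, integral_mul_const, hmean i, zero_mul, add_zero,
      probReal_univ, one_smul] at this
  have hXint : Integrable (fun ω => Real.exp (t * (∑ i, Y i) ω)) ℙ :=
    hind.integrable_exp_mul_sum hmeas (fun i _ => hint i)
  have key := measure_ge_le_exp_mul_mgf (X := ∑ i, Y i) (μ := ℙ) a ht hXint
  rw [hind.mgf_sum hmeas Finset.univ] at key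
  have hsum_eq : {ω | a ≤ (∑ i, Y i) ω} = {ω | a ≤ ∑ i, Y i ω} := by
    ext ω; simp [Finset.sum_apply]
  rw [hsum_eq] at key
  have hbound : Real.exp (-t * a) * ∏ i : Fin n, mgf (Y i) ℙ t
      ≤ Real.exp (-a^2/(2*n)) := by
    have h1 : ∏ i : Fin n, mgf (Y i) ℙ t ≤ Real.cosh t ^ n := by
      calc ∏ i : Fin n, mgf (Y i) ℙ t ≤ ∏ i : Fin n, Real.cosh t := by
            refine Finset.prod_le_prod (fun i _ => mgf_nonneg) (fun i _ => hmgf i)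
        _ = Real.cosh t ^ n := by simp
    have h2 : Real.cosh t ^ n ≤ Real.exp (t^2/2) ^ n := by
      exact pow_le_pow_left₀ (Real.cosh_pos t).le (Real.cosh_le_exp_half_sq t) n
    calc Real.exp (-t * a) * ∏ i : Fin n, mgf (Y i) ℙ t
        ≤ Real.exp (-t * a) * Real.exp (t^2/2) ^ n := by
          refine mul_le_mul_of_nonneg_left (h1.trans h2) (Real.exp_nonneg _)
      _ = Real.exp (-t * a + n * (t^2/2)) := by
          rw [← Real.exp_nat_mul, ← Real.exp_add]
      _ = Real.exp (-a^2/(2*n)) := by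
          congr 1
          rw [hT]
          field_simp
          ring
  refine (ENNReal.le_ofReal_iff_toReal_le (measure_ne_top _ _) (Real.exp_nonneg _)).2 ?_
  exact key.trans hbound

lemma bdd_integrable {Ω : Type*} [MeasureSpace Ω] [IsProbabilityMeasure (ℙ : Measure Ω)]
    (f : Ω → ℝ) (hf : Measurable f) (hbdd : ∀ ω, |f ω| ≤ 1) : Integrable f ℙ :=
  Integrable.mono' (integrable_const 1) hf.aestronglyMeasurable
    (Filter.Eventually.of_forall fun ω => by simpa using hbdd ω)

lemma integral_cos_uniform {Ω : Type*} [MeasureSpace Ω] (f : Ω → ℝ) (hf : Measurable f)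
    (hd : Measure.map f ℙ = uniformAngle) : ∫ ω, Real.cos (f ω) ∂(ℙ : Measure Ω) = 0 := by
  rw [← integral_map hf.aemeasurable Real.continuous_cos.aestronglyMeasurable, hd,
    uniformAngle, integral_smul_measure]
  have : ∫ x in Set.Ico 0 (2*Real.pi), Real.cos x = 0 := by
    rw [MeasureTheory.integral_Ico_eq_integral_Ioo, ← MeasureTheory.integral_Ioc_eq_integral_Ioo,
      ← intervalIntegral.integral_of_le (by positivity), integral_cos]
    simp [Real.sin_two_pi]
  rw [this, smul_zero]

lemma integral_sin_uniform {Ω : Type*} [MeasureSpace Ω] (f : Ω → ℝ) (hf : Measurable f)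
    (hd : Measure.map f ℙ = uniformAngle) : ∫ ω, Real.sin (f ω) ∂(ℙ : Measure Ω) = 0 := by
  rw [← integral_map hf.aemeasurable Real.continuous_sin.aestronglyMeasurable, hd,
    uniformAngle, integral_smul_measure]
  have : ∫ x in Set.Ico 0 (2*Real.pi), Real.sin x = 0 := by
    rw [MeasureTheory.integral_Ico_eq_integral_Ioo, ← MeasureTheory.integral_Ioc_eq_integral_Ioo,
      ← intervalIntegral.integral_of_le (by positivity), integral_sin]
    simp [Real.cos_two_pi]
  rw [this, smul_zero]

lemma integral_cos_sub {Ω : Type*} [MeasureSpace Ω] [IsProbabilityMeasure (ℙ : Measure Ω)]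
    (f g : Ω → ℝ) (hf : Measurable f) (hg : Measurable g) (hind : IndepFun f g ℙ)
    (hdf : Measure.map f ℙ = uniformAngle) (hdg : Measure.map g ℙ = uniformAngle) :
    ∫ ω, Real.cos (f ω - g ω) ∂(ℙ : Measure Ω) = 0 := by
  have h1 : IndepFun (fun ω => Real.cos (f ω)) (fun ω => Real.cos (g ω)) ℙ :=
    hind.comp Real.measurable_cos Real.measurable_cos
  have h2 : IndepFun (fun ω => Real.sin (f ω)) (fun ω => Real.sin (g ω)) ℙ :=
    hind.comp Real.measurable_sin Real.measurable_sin
  have hccint := h1.integral_mul_eq_mul_integral (Real.measurable_cos.comp hf).aestronglyMeasurable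
    (Real.measurable_cos.comp hg).aestronglyMeasurable
  have hssint := h2.integral_mul_eq_mul_integral (Real.measurable_sin.comp hf).aestronglyMeasurable
    (Real.measurable_sin.comp hg).aestronglyMeasurable
  have hi1 : Integrable (fun ω => Real.cos (f ω) * Real.cos (g ω)) ℙ :=
    bdd_integrable _ ((Real.measurable_cos.comp hf).mul (Real.measurable_cos.comp hg))
      (fun ω => by rw [abs_mul]
                   exact mul_le_one₀ (Real.abs_cos_le_one _) (abs_nonneg _) (Real.abs_cos_le_one _))
  have hi2 : Integrable (fun ω => Real.sin (f ω) * Real.sin (g ω)) ℙ :=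
    bdd_integrable _ ((Real.measurable_sin.comp hf).mul (Real.measurable_sin.comp hg))
      (fun ω => by rw [abs_mul]
                   exact mul_le_one₀ (Real.abs_sin_le_one _) (abs_nonneg _) (Real.abs_sin_le_one _))
  simp only [Real.cos_sub]
  rw [integral_add hi1 hi2]
  have e1 : ∫ ω, Real.cos (f ω) * Real.cos (g ω) ∂ℙ = 0 := by
    rw [integral_cos_uniform f hf hdf, zero_mul] at hccint
    exact hccint
  have e2 : ∫ ω, Real.sin (f ω) * Real.sin (g ω) ∂ℙ = 0 := by
    rw [integral_sin_uniform f hf hdf, zero_mul] at hssint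
    exact hssint
  rw [e1, e2, add_zero]

lemma integral_sin_sub {Ω : Type*} [MeasureSpace Ω] [IsProbabilityMeasure (ℙ : Measure Ω)]
    (f g : Ω → ℝ) (hf : Measurable f) (hg : Measurable g) (hind : IndepFun f g ℙ)
    (hdf : Measure.map f ℙ = uniformAngle) (hdg : Measure.map g ℙ = uniformAngle) :
    ∫ ω, Real.sin (f ω - g ω) ∂(ℙ : Measure Ω) = 0 := by
  have h1 : IndepFun (fun ω => Real.sin (f ω)) (fun ω => Real.cos (g ω)) ℙ :=
    hind.comp Real.measurable_sin Real.measurable_cos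
  have h2 : IndepFun (fun ω => Real.cos (f ω)) (fun ω => Real.sin (g ω)) ℙ :=
    hind.comp Real.measurable_cos Real.measurable_sin
  have hccint := h1.integral_mul_eq_mul_integral (Real.measurable_sin.comp hf).aestronglyMeasurable
    (Real.measurable_cos.comp hg).aestronglyMeasurable
  have hssint := h2.integral_mul_eq_mul_integral (Real.measurable_cos.comp hf).aestronglyMeasurable
    (Real.measurable_sin.comp hg).aestronglyMeasurable
  have hi1 : Integrable (fun ω => Real.sin (f ω) * Real.cos (g ω)) ℙ :=
    bdd_integrable _ ((Real.measurable_sin.comp hf).mul (Real.measurable_cos.comp hg))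
      (fun ω => by rw [abs_mul]
                   exact mul_le_one₀ (Real.abs_sin_le_one _) (abs_nonneg _) (Real.abs_cos_le_one _))
  have hi2 : Integrable (fun ω => Real.cos (f ω) * Real.sin (g ω)) ℙ :=
    bdd_integrable _ ((Real.measurable_cos.comp hf).mul (Real.measurable_sin.comp hg))
      (fun ω => by rw [abs_mul]
                   exact mul_le_one₀ (Real.abs_cos_le_one _) (abs_nonneg _) (Real.abs_sin_le_one _))
  simp only [Real.sin_sub]
  rw [integral_sub hi1 hi2]
  have e1 : ∫ ω, Real.sin (f ω) * Real.cos (g ω) ∂ℙ = 0 := by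
    rw [integral_sin_uniform f hf hdf, zero_mul] at hccint
    exact hccint
  have e2 : ∫ ω, Real.cos (f ω) * Real.sin (g ω) ∂ℙ = 0 := by
    rw [integral_sin_uniform g hg hdg, mul_zero] at hssint
    exact hssint
  rw [e1, e2, sub_zero]

open Complex in
lemma hNorm_z {n : ℕ} (hn : 0 < n) (x : Fin n → ℝ) :
    hNorm (fun i => Complex.exp ((x i : ℂ) * I) / (Real.sqrt n : ℂ)) = 1 := by
  have hterm : ∀ i, ‖Complex.exp ((x i : ℂ) * I) / (Real.sqrt n : ℂ)‖ ^ 2 = 1 / n := by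
    intro i
    rw [norm_div, Complex.norm_exp]
    simp only [mul_re, ofReal_re, I_re, mul_zero, ofReal_im, I_im, mul_one, zero_sub,
      neg_zero, Real.exp_zero]  -- hopefully re = 0
    rw [Complex.norm_real, Real.norm_eq_abs, _root_.abs_of_nonneg (Real.sqrt_nonneg _)]
    rw [div_pow, one_pow, Real.sq_sqrt (by positivity : (0:ℝ) ≤ n)]
  unfold hNorm
  rw [Finset.sum_congr rfl (fun i _ => hterm i)]
  rw [Finset.sum_const, Finset.card_univ, Fintype.card_fin, nsmul_eq_mul]
  rw [mul_one_div, div_self (by positivity : (n:ℝ) ≠ 0), Real.sqrt_one]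

open Complex in
lemma hInner_z {n : ℕ} (hn : 0 < n) (x y : Fin n → ℝ) :
    hInner (fun i => Complex.exp ((x i : ℂ) * I) / (Real.sqrt n : ℂ))
      (fun i => Complex.exp ((y i : ℂ) * I) / (Real.sqrt n : ℂ))
    = (((∑ i, Real.cos (y i - x i) : ℝ) : ℂ) + ((∑ i, Real.sin (y i - x i) : ℝ) : ℂ) * I) / n := by
  have hterm : ∀ i, (starRingEnd ℂ) (Complex.exp ((x i : ℂ) * I) / (Real.sqrt n : ℂ))
      * (Complex.exp ((y i : ℂ) * I) / (Real.sqrt n : ℂ))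
      = (((Real.cos (y i - x i) : ℝ) : ℂ) + ((Real.sin (y i - x i) : ℝ) : ℂ) * I) / n := by
    intro i
    rw [map_div₀, ← Complex.exp_conj, _root_.map_mul, Complex.conj_I, Complex.conj_ofReal,
      Complex.conj_ofReal]
    rw [div_mul_div_comm, ← Complex.exp_add]
    have h1 : (Real.sqrt n : ℂ) * (Real.sqrt n : ℂ) = (n : ℂ) := by
      rw [← Complex.ofReal_mul, Real.mul_self_sqrt (by positivity)]; norm_cast
    have h2 : (x i : ℂ) * (-I) + (y i : ℂ) * I = ((y i - x i : ℝ) : ℂ) * I := by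
      push_cast; ring
    rw [h1, h2, Complex.exp_mul_I, ← Complex.ofReal_cos, ← Complex.ofReal_sin]
  unfold hInner
  rw [Finset.sum_congr rfl (fun i _ => hterm i), ← Finset.sum_div]
  congr 1
  rw [Finset.sum_add_distrib, ← Finset.sum_mul]
  push_cast
  ring

open Complex in
lemma hInner_z_norm_le {n : ℕ} (hn : 0 < n) (x y : Fin n → ℝ) :
    ‖hInner (fun i => Complex.exp ((x i : ℂ) * I) / (Real.sqrt n : ℂ))
      (fun i => Complex.exp ((y i : ℂ) * I) / (Real.sqrt n : ℂ))‖
    ≤ (|∑ i, Real.cos (y i - x i)| + |∑ i, Real.sin (y i - x i)|) / n := by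
  rw [hInner_z hn x y, norm_div]
  have : ‖((n:ℝ) : ℂ)‖ = (n : ℝ) := by
    rw [Complex.norm_real, Real.norm_eq_abs, _root_.abs_of_nonneg (by positivity)]
  rw [show ((n:ℕ) : ℂ) = ((n:ℝ) : ℂ) by push_cast; rfl, this]
  apply div_le_div_of_nonneg_right ?_ (by positivity)
  calc ‖(((∑ i, Real.cos (y i - x i) : ℝ)) : ℂ) + ((∑ i, Real.sin (y i - x i) : ℝ) : ℂ) * I‖
      ≤ ‖(((∑ i, Real.cos (y i - x i) : ℝ)) : ℂ)‖ + ‖((∑ i, Real.sin (y i - x i) : ℝ) : ℂ) * I‖ :=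
        norm_add_le _ _
    _ = |∑ i, Real.cos (y i - x i)| + |∑ i, Real.sin (y i - x i)| := by
        rw [norm_mul, Complex.norm_I, mul_one, Complex.norm_real, Complex.norm_real,
          Real.norm_eq_abs, Real.norm_eq_abs]

/-- approximate orthogonality with high probability, general `k`.
There is an absolute constant `c > 0` such that for i.i.d. uniform angles
`θ_{l,i}` on `[0,2π)` (for `1 ≤ l ≤ k`, `1 ≤ i ≤ n`) and `z_l ∈ ℂⁿ` with entries
`e^{ιθ_{l,i}}/√n`, for every `δ ∈ (0,1)`: if `n ≥ 4 log k/(cδ²)`, then `z₁,…,z_k` are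
`δ`-orthogonal with probability at least `1 − exp(−cδ²n/2)`. -/
theorem stmt1 :
    ∃ c : ℝ, 0 < c ∧
      ∀ (k n : ℕ), 2 ≤ k → 0 < n →
      ∀ (Ω : Type) [MeasureSpace Ω], IsProbabilityMeasure (ℙ : Measure Ω) →
      ∀ (θ : Fin k → Fin n → Ω → ℝ),
        (∀ l i, Measurable (θ l i)) →
        -- the kn angle variables are mutually independent
        iIndepFun (fun q : Fin k × Fin n => θ q.1 q.2) ℙ →
        -- each is uniformly distributed on [0, 2π)
        (∀ l i, Measure.map (θ l i) ℙ = uniformAngle) →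
        ∀ δ : ℝ, 0 < δ → δ < 1 →
          4 * Real.log k / (c * δ ^ 2) ≤ (n : ℝ) →
          ENNReal.ofReal (1 - Real.exp (-c * δ ^ 2 * n / 2)) ≤
            ℙ {ω : Ω |
              DeltaOrth
                (fun l : Fin k =>
                  fun i => Complex.exp ((θ l i ω : ℂ) * Complex.I) / (Real.sqrt n : ℂ))
                δ} := by
  
  refine ⟨1/16, by norm_num, ?_⟩
  intro k n hk hn Ω _ hprob θ hmeas hind hdist δ hδ0 hδ1 hδn
  haveI := hprob
  have hn' : (0:ℝ) < n := Nat.cast_pos.2 hn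
  set a : ℝ := δ * n / 2 with ha
  have ha0 : 0 < a := by positivity
  set E₀ : ℝ := Real.exp (-a^2/(2*n)) with hE₀
  set E : ℝ := Real.exp (-(1/16) * δ ^ 2 * n / 2) with hE
  -- the four bad event families
  set B1 : Fin k → Fin k → Set Ω := fun l j =>
    {ω | a ≤ ∑ i, Real.cos (θ j i ω - θ l i ω)} with hB1
  set B2 : Fin k → Fin k → Set Ω := fun l j =>
    {ω | a ≤ ∑ i, -Real.cos (θ j i ω - θ l i ω)} with hB2
  set B3 : Fin k → Fin k → Set Ω := fun l j =>
    {ω | a ≤ ∑ i, Real.sin (θ j i ω - θ l i ω)} with hB3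
  set B4 : Fin k → Fin k → Set Ω := fun l j =>
    {ω | a ≤ ∑ i, -Real.sin (θ j i ω - θ l i ω)} with hB4
  set bad : Set Ω := ⋃ (p : Fin k × Fin k), ⋃ (_ : p.1 ≠ p.2),
    (B1 p.1 p.2 ∪ B2 p.1 p.2 ∪ B3 p.1 p.2 ∪ B4 p.1 p.2) with hbad
  -- tail bound for each single bad event
  have tail : ∀ l j : Fin k, l ≠ j →
      ℙ (B1 l j) ≤ ENNReal.ofReal E₀ ∧ ℙ (B2 l j) ≤ ENNReal.ofReal E₀ ∧
      ℙ (B3 l j) ≤ ENNReal.ofReal E₀ ∧ ℙ (B4 l j) ≤ ENNReal.ofReal E₀ := by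
    intro l j hlj
    have hpair := pair_iIndep θ hmeas hind hlj
    have hIF : ∀ i : Fin n, IndepFun (θ j i) (θ l i) ℙ := fun i =>
      hind.indepFun (by simp [Ne.symm hlj] : ((j, i) : Fin k × Fin n) ≠ (l, i))
    have hgen : ∀ g : ℝ × ℝ → ℝ, Measurable g → (∀ p, |g p| ≤ 1) →
        (∀ i : Fin n, ∫ ω, g (θ l i ω, θ j i ω) ∂ℙ = 0) →
        ℙ {ω | a ≤ ∑ i, g (θ l i ω, θ j i ω)} ≤ ENNReal.ofReal E₀ := by
      intro g hg hgb hgm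
      exact chernoff (fun i ω => g (θ l i ω, θ j i ω))
        (fun i => hg.comp ((hmeas l i).prodMk (hmeas j i)))
        (hpair.comp (fun _ => g) (fun _ => hg))
        (fun i ω => hgb _) hgm ha0 hn
    refine ⟨?_, ?_, ?_, ?_⟩
    · exact hgen (fun p => Real.cos (p.2 - p.1))
        (Real.measurable_cos.comp (measurable_snd.sub measurable_fst))
        (fun p => Real.abs_cos_le_one _)
        (fun i => integral_cos_sub (θ j i) (θ l i) (hmeas j i) (hmeas l i) (hIF i)
          (hdist j i) (hdist l i))
    · exact hgen (fun p => -Real.cos (p.2 - p.1))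
        (Real.measurable_cos.comp (measurable_snd.sub measurable_fst)).neg
        (fun p => by rw [abs_neg]; exact Real.abs_cos_le_one _)
        (fun i => by
          rw [integral_neg, integral_cos_sub (θ j i) (θ l i) (hmeas j i) (hmeas l i) (hIF i)
            (hdist j i) (hdist l i), neg_zero])
    · exact hgen (fun p => Real.sin (p.2 - p.1))
        (Real.measurable_sin.comp (measurable_snd.sub measurable_fst))
        (fun p => Real.abs_sin_le_one _)
        (fun i => integral_sin_sub (θ j i) (θ l i) (hmeas j i) (hmeas l i) (hIF i)
          (hdist j i) (hdist l i))
    · exact hgen (fun p => -Real.sin (p.2 - p.1))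
        (Real.measurable_sin.comp (measurable_snd.sub measurable_fst)).neg
        (fun p => by rw [abs_neg]; exact Real.abs_sin_le_one _)
        (fun i => by
          rw [integral_neg, integral_sin_sub (θ j i) (θ l i) (hmeas j i) (hmeas l i) (hIF i)
            (hdist j i) (hdist l i), neg_zero])
  -- bound on the bad set
  have hbad_le : ℙ bad ≤ ENNReal.ofReal ((k:ℝ)^2 * (4 * E₀)) := by
    calc ℙ bad ≤ ∑ p : Fin k × Fin k,
        ℙ (⋃ (_ : p.1 ≠ p.2), (B1 p.1 p.2 ∪ B2 p.1 p.2 ∪ B3 p.1 p.2 ∪ B4 p.1 p.2)) :=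
          measure_iUnion_fintype_le _ _
      _ ≤ ∑ _p : Fin k × Fin k, ENNReal.ofReal (4 * E₀) := by
          refine Finset.sum_le_sum fun p _ => ?_
          by_cases hp : p.1 ≠ p.2
          · obtain ⟨t1, t2, t3, t4⟩ := tail p.1 p.2 hp
            calc ℙ (⋃ (_ : p.1 ≠ p.2), (B1 p.1 p.2 ∪ B2 p.1 p.2 ∪ B3 p.1 p.2 ∪ B4 p.1 p.2))
                ≤ ℙ (B1 p.1 p.2 ∪ B2 p.1 p.2 ∪ B3 p.1 p.2 ∪ B4 p.1 p.2) :=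
                  measure_mono (Set.iUnion_subset fun _ => subset_rfl)
              _ ≤ ℙ (B1 p.1 p.2 ∪ B2 p.1 p.2 ∪ B3 p.1 p.2) + ℙ (B4 p.1 p.2) := measure_union_le _ _
              _ ≤ (ℙ (B1 p.1 p.2 ∪ B2 p.1 p.2) + ℙ (B3 p.1 p.2)) + ℙ (B4 p.1 p.2) := by
                  gcongr; exact measure_union_le _ _
              _ ≤ ((ℙ (B1 p.1 p.2) + ℙ (B2 p.1 p.2)) + ℙ (B3 p.1 p.2)) + ℙ (B4 p.1 p.2) := by
                  gcongr; exact measure_union_le _ _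
              _ ≤ ((ENNReal.ofReal E₀ + ENNReal.ofReal E₀) + ENNReal.ofReal E₀)
                    + ENNReal.ofReal E₀ := by gcongr
              _ = ENNReal.ofReal (4 * E₀) := by
                  rw [← ENNReal.ofReal_add (by positivity) (by positivity),
                    ← ENNReal.ofReal_add (by positivity) (by positivity),
                    ← ENNReal.ofReal_add (by positivity) (by positivity)]
                  ring_nf
          · simp only [not_not] at hp
            simp [hp]
      _ = ENNReal.ofReal ((k:ℝ)^2 * (4 * E₀)) := by
          rw [Finset.sum_const, Finset.card_univ]
          simp only [Fintype.card_prod, Fintype.card_fin]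
          rw [nsmul_eq_mul, ← ENNReal.ofReal_natCast,
            ← ENNReal.ofReal_mul (by positivity)]
          congr 1
          push_cast
          ring
  -- numeric comparison
  have hnum : (k:ℝ)^2 * (4 * E₀) ≤ E := by
    have hk1 : (1:ℝ) ≤ k := by exact_mod_cast (le_trans one_le_two hk)
    have hk0 : (0:ℝ) < k := lt_of_lt_of_le one_pos hk1
    have hlogk : 64 * Real.log k ≤ δ^2 * n := by
      rw [div_le_iff₀ (by positivity)] at hδn
      nlinarith [hδn]
    have hl2 : Real.log 2 ≤ Real.log k := by
      apply Real.log_le_log (by norm_num)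
      exact_mod_cast hk
    have hlog2 : (0:ℝ) < Real.log 2 := Real.log_pos (by norm_num)
    have h4 : Real.log 4 = 2 * Real.log 2 := by
      rw [show (4:ℝ) = 2^2 by norm_num, Real.log_pow]; push_cast; ring
    have hklog : (k:ℝ)^2 = Real.exp (2 * Real.log k) := by
      rw [sq, ← Real.exp_log hk0, ← Real.exp_add, Real.exp_log hk0]
      ring_nf
    have hE₀' : E₀ = Real.exp (-(δ^2*(n:ℝ))/8) := by
      rw [hE₀, ha]
      congr 1
      field_simp
      ring
    have h40 : (4:ℝ) = Real.exp (Real.log 4) := (Real.exp_log (by norm_num)).symm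
    calc (k:ℝ)^2 * (4 * E₀)
        = Real.exp (2 * Real.log k + (Real.log 4 + -(δ^2*(n:ℝ))/8)) := by
          rw [hklog, hE₀', Real.exp_add, Real.exp_add, ← h40]
      _ ≤ E := by
          rw [hE]
          apply Real.exp_le_exp.2
          nlinarith [hlogk, hl2, hlog2, h4, sq_nonneg δ]
  have hbadE : ℙ bad ≤ ENNReal.ofReal E :=
    hbad_le.trans (ENNReal.ofReal_le_ofReal hnum)
  -- every ω outside bad satisfies the δ-orthogonality property
  have hcover : ∀ ω, ω ∉ bad → ∀ (i j : Fin k), i ≠ j →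
      ‖hInner (fun m => Complex.exp ((θ i m ω : ℂ) * Complex.I) / (Real.sqrt n : ℂ))
        (fun m => Complex.exp ((θ j m ω : ℂ) * Complex.I) / (Real.sqrt n : ℂ))‖ ≤
      δ * hNorm (fun m => Complex.exp ((θ i m ω : ℂ) * Complex.I) / (Real.sqrt n : ℂ))
        * hNorm (fun m => Complex.exp ((θ j m ω : ℂ) * Complex.I) / (Real.sqrt n : ℂ)) := by
    intro ω hω l j hlj
    have hnot : ω ∉ B1 l j ∪ B2 l j ∪ B3 l j ∪ B4 l j := by
      intro hmem
      exact hω (Set.mem_iUnion.2 ⟨(l, j), Set.mem_iUnion.2 ⟨hlj, hmem⟩⟩)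
    simp only [Set.mem_union, not_or, hB1, hB2, hB3, hB4, Set.mem_setOf_eq, not_le] at hnot
    obtain ⟨⟨⟨h1, h2⟩, h3⟩, h4⟩ := hnot
    rw [Finset.sum_neg_distrib] at h2 h4
    have hCabs : |∑ m, Real.cos (θ j m ω - θ l m ω)| ≤ a :=
      le_of_lt (abs_lt.2 ⟨by linarith, h1⟩)
    have hSabs : |∑ m, Real.sin (θ j m ω - θ l m ω)| ≤ a :=
      le_of_lt (abs_lt.2 ⟨by linarith, h3⟩)
    rw [hNorm_z hn, hNorm_z hn, mul_one, mul_one]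
    calc ‖hInner (fun m => Complex.exp ((θ l m ω : ℂ) * Complex.I) / (Real.sqrt n : ℂ))
          (fun m => Complex.exp ((θ j m ω : ℂ) * Complex.I) / (Real.sqrt n : ℂ))‖
        ≤ (|∑ m, Real.cos (θ j m ω - θ l m ω)| + |∑ m, Real.sin (θ j m ω - θ l m ω)|) / n :=
          hInner_z_norm_le hn (fun m => θ l m ω) (fun m => θ j m ω)
      _ ≤ (a + a) / n := by gcongr
      _ = δ := by rw [ha]; field_simp; norm_num
  have hEle1 : E ≤ 1 := by
    rw [hE, Real.exp_le_one_iff]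
    nlinarith [sq_nonneg δ]
  set good : Set Ω := {ω : Ω |
    ∀ (i j : Fin k), i ≠ j →
      ‖hInner ((fun l : Fin k => fun i => Complex.exp ((θ l i ω : ℂ) * Complex.I) / (Real.sqrt n : ℂ)) i)
        ((fun l : Fin k => fun i => Complex.exp ((θ l i ω : ℂ) * Complex.I) / (Real.sqrt n : ℂ)) j)‖ ≤
      δ * hNorm ((fun l : Fin k => fun i => Complex.exp ((θ l i ω : ℂ) * Complex.I) / (Real.sqrt n : ℂ)) i)
        * hNorm ((fun l : Fin k => fun i => Complex.exp ((θ l i ω : ℂ) * Complex.I) / (Real.sqrt n : ℂ)) j)}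
    with hgood
  have key : (1 : ENNReal) ≤ ℙ good + ENNReal.ofReal E := by
    calc (1 : ENNReal) = ℙ (Set.univ) := measure_univ.symm
      _ ≤ ℙ (good ∪ bad) := by
          apply measure_mono
          intro ω _
          by_cases h : ω ∈ bad
          · exact Or.inr h
          · exact Or.inl (hcover ω h)
      _ ≤ ℙ good + ℙ bad := measure_union_le _ _
      _ ≤ ℙ good + ENNReal.ofReal E := add_le_add_right hbadE _
  calc ENNReal.ofReal (1 - E) = 1 - ENNReal.ofReal E := by
        rw [ENNReal.ofReal_sub _ (Real.exp_nonneg _), ENNReal.ofReal_one]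
    _ ≤ ℙ good := tsub_le_iff_right.2 key
end
end

section
/- Let n ≥ 2, λ > 0, p_1 > p_2 > 0, let z_1, z_2 ∈ ℂ^n be unit vectors with |⟨z_1, z_2⟩| ≤ δ for some δ ∈ (0,1), and let M = nλ(p_1 z_1 z_1^* + p_2 z_2 z_2^*). Let λ̃_1 ≥ λ̃_2 be the two largest eigenvalues of M and let ṽ_1, ṽ_2 be corresponding orthonormal eigenvectors. Then |⟨z_1, ṽ_1⟩|² ≥ (p_1 − p_2)/√((p_1−p_2)² + 4p_1p_2δ²) and |⟨z_2, ṽ_2⟩|² ≥ (p_1(1−δ²) − p_2)/√((p_1−p_2)² + 4p_1p_2δ²). -/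
open MeasureTheory ProbabilityTheory Complex Matrix
open scoped BigOperators ENNReal

noncomputable section

lemma hInner_self {n : ℕ} (x : Fin n → ℂ) :
    hInner x x = ((∑ i, ‖x i‖ ^ 2 : ℝ) : ℂ) := by
  unfold hInner
  push_cast
  exact Finset.sum_congr rfl fun i _ => by rw [mul_comm, Complex.mul_conj']

lemma hInner_self_of_hNorm {n : ℕ} (x : Fin n → ℂ) (hx : hNorm x = 1) :
    hInner x x = 1 := by
  unfold hNorm at hx
  have h0 : (0:ℝ) ≤ ∑ i, ‖x i‖ ^ 2 := Finset.sum_nonneg fun i _ => sq_nonneg _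
  have h2 : ∑ i, ‖x i‖ ^ 2 = 1 := by nlinarith [Real.sq_sqrt h0, hx]
  rw [hInner_self, h2]; norm_num

lemma hInner_conj {n : ℕ} (x y : Fin n → ℂ) :
    hInner y x = (starRingEnd ℂ) (hInner x y) := by
  unfold hInner
  rw [map_sum]
  exact Finset.sum_congr rfl fun i _ => by
    simp only [_root_.map_mul, Complex.conj_conj]; ring

lemma hInner_smul {n : ℕ} (w v : Fin n → ℂ) (a : ℂ) :
    hInner w (fun i => a * v i) = a * hInner w v := by
  unfold hInner
  rw [Finset.mul_sum]
  exact Finset.sum_congr rfl fun i _ => by ring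

lemma hInner_comb {n : ℕ} (w x y : Fin n → ℂ) (a b : ℂ) :
    hInner w (fun i => a * x i + b * y i) = a * hInner w x + b * hInner w y := by
  unfold hInner
  rw [Finset.mul_sum, Finset.mul_sum, ← Finset.sum_add_distrib]
  exact Finset.sum_congr rfl fun i _ => by ring

lemma hInner_lin {n : ℕ} {a b tv : ℂ} {x y v : Fin n → ℂ}
    (h : ∀ i, a * x i + b * y i = tv * v i) (w : Fin n → ℂ) :
    a * hInner w x + b * hInner w y = tv * hInner w v := by
  rw [← hInner_comb]
  have h2 : (fun i => a * x i + b * y i) = (fun i => tv * v i) := funext h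
  rw [h2, hInner_smul]

lemma eig_mem {n : ℕ} (M : Matrix (Fin n) (Fin n) ℂ) (hM : M.IsHermitian) (t : ℝ)
    (x : Fin n → ℂ) (hx : x ≠ 0) (heq : ∀ i, M.mulVec x i = (t:ℂ) * x i) :
    ∃ k, hM.eigenvalues k = t := by
  have h1 : ((t:ℂ) • (1 : Matrix (Fin n) (Fin n) ℂ) - M).mulVec x = 0 := by
    funext i
    simp only [Matrix.sub_mulVec, Matrix.smul_mulVec, Matrix.one_mulVec, Pi.sub_apply,
      Pi.smul_apply, smul_eq_mul, Pi.zero_apply, heq i]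
    ring
  have hdet : ((t:ℂ) • (1 : Matrix (Fin n) (Fin n) ℂ) - M).det = 0 :=
    Matrix.exists_mulVec_eq_zero_iff.mp ⟨x, hx, h1⟩
  have hns : ¬ IsUnit ((t:ℂ) • (1 : Matrix (Fin n) (Fin n) ℂ) - M) := by
    rw [Matrix.isUnit_iff_isUnit_det, hdet]; simp
  have hspec : t ∈ spectrum ℝ M := by
    rw [spectrum.mem_iff]
    convert hns using 2
    rw [Algebra.algebraMap_eq_smul_one]
    ext i j
    simp
  rw [hM.spectrum_real_eq_range_eigenvalues] at hspec
  obtain ⟨k, hk⟩ := hspec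
  exact ⟨k, hk⟩

lemma classify (c p1 p2 t : ℝ) (s u1 u2 : ℂ)
    (hc : 0 < c) (hp2 : 0 < p2) (hp12 : p2 < p1)
    (E1 : (c:ℂ) * ((p1:ℂ) * u1 + (p2:ℂ) * u2 * s) = (t:ℂ) * u1)
    (E2 : (c:ℂ) * ((p1:ℂ) * u1 * (starRingEnd ℂ) s + (p2:ℂ) * u2) = (t:ℂ) * u2)
    (E3 : (c:ℂ) * ((p1:ℂ) * u1 * (starRingEnd ℂ) u1 + (p2:ℂ) * u2 * (starRingEnd ℂ) u2) = (t:ℂ)) :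
    t = 0 ∨ t = c * ((p1 + p2 - Real.sqrt ((p1-p2)^2 + 4*p1*p2*‖s‖^2))/2)
        ∨ t = c * ((p1 + p2 + Real.sqrt ((p1-p2)^2 + 4*p1*p2*‖s‖^2))/2) := by
  set d : ℝ := ‖s‖ with hd
  set q : ℝ := Real.sqrt ((p1-p2)^2 + 4*p1*p2*d^2) with hq
  have hDnn : (0:ℝ) ≤ (p1-p2)^2 + 4*p1*p2*d^2 :=
    add_nonneg (sq_nonneg _) (mul_nonneg (mul_nonneg (by linarith : (0:ℝ) ≤ 4*p1) hp2.le) (sq_nonneg d))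
  have hq2 : q^2 = (p1-p2)^2 + 4*p1*p2*d^2 := Real.sq_sqrt hDnn
  have hcC : (c:ℂ) ≠ 0 := by exact_mod_cast hc.ne'
  have hp1C : (p1:ℂ) ≠ 0 := by exact_mod_cast (hp2.trans hp12).ne'
  have hp2C : (p2:ℂ) ≠ 0 := by exact_mod_cast hp2.ne'
  have R1 : ((t:ℂ) - (c:ℂ)*p1) * u1 = (c:ℂ)*p2*(s*u2) := by linear_combination -E1
  have R2 : ((t:ℂ) - (c:ℂ)*p2) * u2 = (c:ℂ)*p1*((starRingEnd ℂ) s*u1) := by linear_combination -E2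
  by_cases hu1 : u1 = 0
  · by_cases hu2 : u2 = 0
    · left
      have h : (t:ℂ) = 0 := by rw [← E3, hu1, hu2]; ring
      exact_mod_cast h
    · have hsu : s * u2 = 0 := by
        have h : (c:ℂ)*p2*(s*u2) = 0 := by rw [← R1, hu1]; ring
        exact (mul_eq_zero.mp h).resolve_left (mul_ne_zero hcC hp2C)
      have hs0 : s = 0 := (mul_eq_zero.mp hsu).resolve_right hu2
      have hd0 : d = 0 := by rw [hd, hs0, norm_zero]
      have ht : t = c * p2 := by
        have h : ((t:ℂ) - (c:ℂ)*p2) * u2 = 0 := by rw [R2, hu1]; ring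
        have h2 : ((t:ℂ) - (c:ℂ)*p2) = 0 := (mul_eq_zero.mp h).resolve_right hu2
        have h3 : t - c*p2 = 0 := by exact_mod_cast h2
        linarith
      right; left
      have hqv : q = p1 - p2 := by
        rw [hq, hd0, show (p1-p2)^2 + 4*p1*p2*(0:ℝ)^2 = (p1-p2)^2 by ring]
        exact Real.sqrt_sq (by linarith)
      rw [hqv, ht]; ring
  · by_cases hu2 : u2 = 0
    · have hsu : (starRingEnd ℂ) s * u1 = 0 := by
        have h : (c:ℂ)*p1*((starRingEnd ℂ) s*u1) = 0 := by rw [← R2, hu2]; ring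
        exact (mul_eq_zero.mp h).resolve_left (mul_ne_zero hcC hp1C)
      have hs0 : s = 0 := by
        have h := (mul_eq_zero.mp hsu).resolve_right hu1
        simpa using h
      have hd0 : d = 0 := by rw [hd, hs0, norm_zero]
      have ht : t = c * p1 := by
        have h : ((t:ℂ) - (c:ℂ)*p1) * u1 = 0 := by rw [R1, hu2]; ring
        have h2 : ((t:ℂ) - (c:ℂ)*p1) = 0 := (mul_eq_zero.mp h).resolve_right hu1
        have h3 : t - c*p1 = 0 := by exact_mod_cast h2
        linarith
      right; right
      have hqv : q = p1 - p2 := by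
        rw [hq, hd0, show (p1-p2)^2 + 4*p1*p2*(0:ℝ)^2 = (p1-p2)^2 by ring]
        exact Real.sqrt_sq (by linarith)
      rw [hqv, ht]; ring
    · have P : ((((t:ℂ) - (c:ℂ)*p1) * ((t:ℂ) - (c:ℂ)*p2))
          - (c:ℂ)^2*p1*p2*(s * (starRingEnd ℂ) s)) * (u1*u2) = 0 := by
        linear_combination ((t:ℂ) - (c:ℂ)*p2)*u2 * R1 + (c:ℂ)*p2*s*u2 * R2
      have hne : u1 * u2 ≠ 0 := mul_ne_zero hu1 hu2
      have P1 := (mul_eq_zero.mp P).resolve_right hne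
      have hss : s * (starRingEnd ℂ) s = ((d^2:ℝ):ℂ) := by
        rw [Complex.mul_conj']; norm_cast
      have P2 : ((t:ℂ) - (c:ℂ)*p1) * ((t:ℂ) - (c:ℂ)*p2) = (c:ℂ)^2*p1*p2*((d^2:ℝ):ℂ) := by
        rw [← hss]; linear_combination P1
      have hreal : (t - c*p1) * (t - c*p2) = c^2*p1*p2*d^2 := by exact_mod_cast P2
      have F : (t - c*((p1+p2-q)/2)) * (t - c*((p1+p2+q)/2)) = 0 := by
        linear_combination hreal - (c^2/4)*hq2
      rcases mul_eq_zero.mp F with h | h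
      · right; left; linarith [sub_eq_zero.mp h]
      · right; right; linarith [sub_eq_zero.mp h]

lemma keyLemma {n : ℕ} (cC p1C p2C : ℂ) (z1 z2 v : Fin n → ℂ)
    (M : Matrix (Fin n) (Fin n) ℂ)
    (hMdef : M = Matrix.of fun i j =>
      cC * (p1C * z1 i * (starRingEnd ℂ) (z1 j) + p2C * z2 i * (starRingEnd ℂ) (z2 j)))
    (i : Fin n) :
    M.mulVec v i = cC*p1C*hInner z1 v*z1 i + cC*p2C*hInner z2 v*z2 i := by
  rw [hMdef]
  trans ∑ j, (cC*p1C*((starRingEnd ℂ) (z1 j)*v j)*z1 i + cC*p2C*((starRingEnd ℂ) (z2 j)*v j)*z2 i)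
  · simp only [Matrix.mulVec, dotProduct, Matrix.of_apply]
    exact Finset.sum_congr rfl fun j _ => by ring
  · unfold hInner
    rw [Finset.mul_sum, Finset.mul_sum, Finset.sum_mul, Finset.sum_mul, ← Finset.sum_add_distrib]
    try exact Finset.sum_congr rfl fun j _ => by ring

lemma bound1 (p1 p2 q R A mp : ℝ) (hp2 : 0 < p2) (hp12 : p2 < p1) (hA0 : 0 ≤ A)
    (hqR : q ≤ R) (hmpp1 : p1 ≤ mp) (hKK : p1*A*q = mp*(mp - p2)) : p1 - p2 ≤ A*R := by
  have hp1 : 0 < p1 := hp2.trans hp12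
  have h1 : p1*(p1-p2) ≤ mp*(mp-p2) := by nlinarith
  have h2 : A*q ≤ A*R := mul_le_mul_of_nonneg_left hqR hA0
  have h3 : p1*(A*q) ≤ p1*(A*R) := mul_le_mul_of_nonneg_left h2 hp1.le
  have h4 : p1*(p1-p2) ≤ p1*(A*R) := by nlinarith [hKK]
  exact le_of_mul_le_mul_left h4 hp1
lemma bound2 (p1 p2 q R B mm d dv : ℝ) (hp2 : 0 < p2) (hp12 : p2 < p1) (hB0 : 0 ≤ B)
    (hqR : q ≤ R) (hmmp2 : mm ≤ p2) (hd2 : d^2 ≤ dv^2)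
    (hBq : B*q = p1*(1-d^2) - mm) : p1*(1-dv^2) - p2 ≤ B*R := by
  have hp1 : 0 < p1 := hp2.trans hp12
  have h2 : B*q ≤ B*R := mul_le_mul_of_nonneg_left hqR hB0
  have h4 : p1*d^2 ≤ p1*dv^2 := mul_le_mul_of_nonneg_left hd2 hp1.le
  nlinarith [hBq]

set_option maxHeartbeats 2000000 in
/-- Lemma: eigenvector correlation bounds for the expected matrix of
bi-synchronization. With `M = nλ(p₁z₁z₁^* + p₂z₂z₂^*)`, `|⟨z₁,z₂⟩| ≤ δ`, and `ṽ₁, ṽ₂`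
orthonormal eigenvectors for the two largest eigenvalues `λ̃₁ ≥ λ̃₂`, one has
`|⟨z₁,ṽ₁⟩|² ≥ (p₁−p₂)/√((p₁−p₂)² + 4p₁p₂δ²)` and
`|⟨z₂,ṽ₂⟩|² ≥ (p₁(1−δ²)−p₂)/√((p₁−p₂)² + 4p₁p₂δ²)`. -/
theorem stmt4 {n : ℕ} (hn : 2 ≤ n) (lam p1 p2 δ : ℝ)
    (hlam : 0 < lam) (hp2 : 0 < p2) (hp12 : p2 < p1)
    (hδ0 : 0 < δ) (hδ1 : δ < 1)
    (z1 z2 : Fin n → ℂ) (hz1 : hNorm z1 = 1) (hz2 : hNorm z2 = 1)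
    (horth : ‖hInner z1 z2‖ ≤ δ)
    (M : Matrix (Fin n) (Fin n) ℂ)
    (hMdef : M = Matrix.of fun i j =>
      ((n : ℂ) * (lam : ℂ)) *
        ((p1 : ℂ) * z1 i * (starRingEnd ℂ) (z1 j) + (p2 : ℂ) * z2 i * (starRingEnd ℂ) (z2 j)))
    (hM : M.IsHermitian)
    (ev : Fin n → ℝ) (hanti : Antitone ev)
    (hperm : ∃ σ : Equiv.Perm (Fin n), ∀ i, ev i = hM.eigenvalues (σ i))
    (vt1 vt2 : Fin n → ℂ)
    (hvt1n : hNorm vt1 = 1) (hvt2n : hNorm vt2 = 1) (hvtorth : hInner vt1 vt2 = 0)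
    (hvt1 : ∀ i, M.mulVec vt1 i = (ev ⟨0, by omega⟩ : ℂ) * vt1 i)
    (hvt2 : ∀ i, M.mulVec vt2 i = (ev ⟨1, by omega⟩ : ℂ) * vt2 i) :
    (p1 - p2) / Real.sqrt ((p1 - p2) ^ 2 + 4 * p1 * p2 * δ ^ 2)
        ≤ ‖hInner z1 vt1‖ ^ 2 ∧
    (p1 * (1 - δ ^ 2) - p2) / Real.sqrt ((p1 - p2) ^ 2 + 4 * p1 * p2 * δ ^ 2)
        ≤ ‖hInner z2 vt2‖ ^ 2 := by
  classical
  -- setup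
  have hp1 : 0 < p1 := hp2.trans hp12
  set c : ℝ := (n:ℝ) * lam with hcdef
  have hc : 0 < c := mul_pos (by exact_mod_cast (by omega : 0 < n)) hlam
  set s : ℂ := hInner z1 z2 with hsdef
  set d : ℝ := ‖s‖ with hddef
  have hd0 : (0:ℝ) ≤ d := norm_nonneg s
  have hdδ : d ≤ δ := horth
  have hd1 : d < 1 := lt_of_le_of_lt hdδ hδ1
  set q : ℝ := Real.sqrt ((p1-p2)^2 + 4*p1*p2*d^2) with hqdef
  set R : ℝ := Real.sqrt ((p1 - p2) ^ 2 + 4 * p1 * p2 * δ ^ 2) with hRdef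
  have hDnn : (0:ℝ) ≤ (p1-p2)^2 + 4*p1*p2*d^2 :=
    add_nonneg (sq_nonneg _) (mul_nonneg (mul_nonneg (by linarith : (0:ℝ) ≤ 4*p1) hp2.le) (sq_nonneg d))
  have hq2 : q^2 = (p1-p2)^2 + 4*p1*p2*d^2 := Real.sq_sqrt hDnn
  have hq0 : (0:ℝ) ≤ q := Real.sqrt_nonneg _
  have hqlb : p1 - p2 ≤ q := by
    nlinarith [hq2, hq0, mul_nonneg (mul_nonneg (by linarith : (0:ℝ) ≤ 4*p1) hp2.le) (sq_nonneg d)]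
  have hqpos : 0 < q := lt_of_lt_of_le (by linarith) hqlb
  have hqub : q < p1 + p2 := by
    nlinarith [hq2, hq0, mul_pos hp1 hp2, sq_nonneg d, mul_pos (mul_pos hp1 hp2) (by nlinarith [sq_nonneg d] : (0:ℝ) < 1 - d^2)]
  have hqR : q ≤ R := Real.sqrt_le_sqrt (by nlinarith [mul_nonneg (mul_nonneg (by linarith : (0:ℝ) ≤ 4*p1) hp2.le) (mul_nonneg hd0 hd0), mul_pos hp1 hp2, mul_le_mul hdδ hdδ hd0 (by linarith : (0:ℝ) ≤ δ)])
  have hR0 : (0:ℝ) < R := lt_of_lt_of_le hqpos hqR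
  set μp : ℝ := (p1+p2+q)/2 with hμp
  set μm : ℝ := (p1+p2-q)/2 with hμm
  have hQp : μp^2 = (p1+p2)*μp - p1*p2*(1-d^2) := by
    rw [hμp]; linear_combination (1/4)*hq2
  have hQm : μm^2 = (p1+p2)*μm - p1*p2*(1-d^2) := by
    rw [hμm]; linear_combination (1/4)*hq2
  have hμpp1 : p1 ≤ μp := by rw [hμp]; linarith
  have hμmp2 : μm ≤ p2 := by rw [hμm]; linarith
  have hμm0 : 0 < μm := by rw [hμm]; linarith
  have hμp0 : 0 < μp := lt_of_lt_of_le hp1 hμpp1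
  have hμppos2 : 0 < μp - p2 := by linarith
  have hμmpos1 : 0 < p1 - μm := by linarith
  -- basic inner products
  have hz11 : hInner z1 z1 = 1 := hInner_self_of_hNorm z1 hz1
  have hz22 : hInner z2 z2 = 1 := hInner_self_of_hNorm z2 hz2
  have hv11 : hInner vt1 vt1 = 1 := hInner_self_of_hNorm vt1 hvt1n
  have hv22 : hInner vt2 vt2 = 1 := hInner_self_of_hNorm vt2 hvt2n
  have hz21 : hInner z2 z1 = (starRingEnd ℂ) s := by rw [hsdef]; exact hInner_conj z1 z2
  have hssC : s * (starRingEnd ℂ) s = ((d:ℝ):ℂ)^2 := by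
    rw [Complex.mul_conj']
  have hssC' : (starRingEnd ℂ) s * s = ((d:ℝ):ℂ)^2 := by rw [mul_comm]; exact hssC
  have hQpC : ((μp:ℝ):ℂ)^2 = (((p1:ℝ):ℂ)+((p2:ℝ):ℂ))*((μp:ℝ):ℂ)
      - ((p1:ℝ):ℂ)*((p2:ℝ):ℂ)*(1-((d:ℝ):ℂ)^2) := by exact_mod_cast hQp
  have hQmC : ((μm:ℝ):ℂ)^2 = (((p1:ℝ):ℂ)+((p2:ℝ):ℂ))*((μm:ℝ):ℂ)
      - ((p1:ℝ):ℂ)*((p2:ℝ):ℂ)*(1-((d:ℝ):ℂ)^2) := by exact_mod_cast hQm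
  -- pointwise formula for M.mulVec
  have hcC : ((c:ℝ):ℂ) = (n:ℂ)*(lam:ℂ) := by rw [hcdef]; push_cast; ring
  have key : ∀ (v : Fin n → ℂ) (i : Fin n), M.mulVec v i
      = ((c:ℝ):ℂ)*(p1:ℂ)*hInner z1 v*z1 i + ((c:ℝ):ℂ)*(p2:ℂ)*hInner z2 v*z2 i := by
    intro v i
    rw [hcC]
    exact keyLemma _ _ _ z1 z2 v M hMdef i
  -- eigen equations for vt1
  set t1 : ℝ := ev ⟨0, by omega⟩ with ht1def
  set t2 : ℝ := ev ⟨1, by omega⟩ with ht2def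
  obtain ⟨u1, hu1⟩ : ∃ u, hInner z1 vt1 = u := ⟨_, rfl⟩
  obtain ⟨u2, hu2⟩ : ∃ u, hInner z2 vt1 = u := ⟨_, rfl⟩
  obtain ⟨w1, hw1⟩ : ∃ u, hInner z1 vt2 = u := ⟨_, rfl⟩
  obtain ⟨w2, hw2⟩ : ∃ u, hInner z2 vt2 = u := ⟨_, rfl⟩
  have base1 : ∀ i, (((c:ℝ):ℂ)*(p1:ℂ)*u1) * z1 i + (((c:ℝ):ℂ)*(p2:ℂ)*u2) * z2 i
      = ((t1:ℝ):ℂ) * vt1 i := by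
    intro i
    have h1 := hvt1 i
    rw [key vt1 i, hu1, hu2] at h1
    exact h1
  have base2 : ∀ i, (((c:ℝ):ℂ)*(p1:ℂ)*w1) * z1 i + (((c:ℝ):ℂ)*(p2:ℂ)*w2) * z2 i
      = ((t2:ℝ):ℂ) * vt2 i := by
    intro i
    have h1 := hvt2 i
    rw [key vt2 i, hw1, hw2] at h1
    exact h1
  have E1a : ((c:ℝ):ℂ) * ((p1:ℂ) * u1 + (p2:ℂ) * u2 * s) = ((t1:ℝ):ℂ) * u1 := by
    have h := hInner_lin base1 z1
    rw [hz11, ← hsdef, hu1] at h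
    linear_combination h
  have E2a : ((c:ℝ):ℂ) * ((p1:ℂ) * u1 * (starRingEnd ℂ) s + (p2:ℂ) * u2) = ((t1:ℝ):ℂ) * u2 := by
    have h := hInner_lin base1 z2
    rw [hz21, hz22, hu2] at h
    linear_combination h
  have E3a : ((c:ℝ):ℂ) * ((p1:ℂ) * u1 * (starRingEnd ℂ) u1 + (p2:ℂ) * u2 * (starRingEnd ℂ) u2)
      = ((t1:ℝ):ℂ) := by
    have h := hInner_lin base1 vt1
    rw [hv11, hInner_conj z1 vt1, hInner_conj z2 vt1, hu1, hu2] at h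
    linear_combination h
  have E1b : ((c:ℝ):ℂ) * ((p1:ℂ) * w1 + (p2:ℂ) * w2 * s) = ((t2:ℝ):ℂ) * w1 := by
    have h := hInner_lin base2 z1
    rw [hz11, ← hsdef, hw1] at h
    linear_combination h
  have E2b : ((c:ℝ):ℂ) * ((p1:ℂ) * w1 * (starRingEnd ℂ) s + (p2:ℂ) * w2) = ((t2:ℝ):ℂ) * w2 := by
    have h := hInner_lin base2 z2
    rw [hz21, hz22, hw2] at h
    linear_combination h
  have E3b : ((c:ℝ):ℂ) * ((p1:ℂ) * w1 * (starRingEnd ℂ) w1 + (p2:ℂ) * w2 * (starRingEnd ℂ) w2)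
      = ((t2:ℝ):ℂ) := by
    have h := hInner_lin base2 vt2
    rw [hv22, hInner_conj z1 vt2, hInner_conj z2 vt2, hw1, hw2] at h
    linear_combination h
  have CR : ((c:ℝ):ℂ)*(p1:ℂ)*w1*(starRingEnd ℂ) u1 + ((c:ℝ):ℂ)*(p2:ℂ)*w2*(starRingEnd ℂ) u2
      = 0 := by
    have h := hInner_lin base2 vt1
    rw [hvtorth, hInner_conj z1 vt1, hInner_conj z2 vt1, hu1, hu2] at h
    linear_combination h
  -- classification of t1 and t2
  have clas1 := classify c p1 p2 t1 s u1 u2 hc hp2 hp12 E1a E2a E3a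
  have clas2 := classify c p1 p2 t2 s w1 w2 hc hp2 hp12 E1b E2b E3b
  rw [← hddef, ← hqdef, ← hμm, ← hμp] at clas1 clas2
  -- existence of eigenvalues c*μp and c*μm
  obtain ⟨σ, hσ⟩ := hperm
  have hσ' : ∀ k, ev (σ.symm k) = hM.eigenvalues k := by
    intro k
    rw [hσ (σ.symm k), Equiv.apply_symm_apply]
  -- eigenvector for c*μp
  set xp : Fin n → ℂ := fun i => ((μp - p2 : ℝ):ℂ) * z1 i + ((p2:ℝ):ℂ) * (starRingEnd ℂ) s * z2 i
    with hxp
  have hixp1 : hInner z1 xp = ((μp - p2 : ℝ):ℂ) + ((p2:ℝ):ℂ) * (starRingEnd ℂ) s * s := by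
    rw [hxp, hInner_comb, hz11, ← hsdef]; ring
  have hixp2 : hInner z2 xp = ((μp:ℝ):ℂ) * (starRingEnd ℂ) s := by
    rw [hxp, hInner_comb, hz21, hz22]; push_cast; ring
  have heqp : ∀ i, M.mulVec xp i = ((c*μp : ℝ):ℂ) * xp i := by
    intro i
    rw [key xp i, hixp1, hixp2, hxp]
    push_cast
    linear_combination (-((c:ℝ):ℂ)*(z1 i))*hQpC + ((c:ℝ):ℂ)*(p1:ℂ)*(p2:ℂ)*(z1 i)*hssC'
  have hxpne : xp ≠ 0 := by
    intro h0
    by_cases hs0 : s = 0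
    · have h1 := hixp1
      rw [h0, hs0] at h1
      simp only [hInner, Pi.zero_apply, mul_zero, Finset.sum_const_zero] at h1
      have h2 : (0:ℂ) = ((μp - p2 : ℝ):ℂ) := by rw [h1]; simp
      have : (0:ℝ) = μp - p2 := by exact_mod_cast h2
      linarith
    · have h1 := hixp2
      rw [h0] at h1
      simp only [hInner, Pi.zero_apply, mul_zero, Finset.sum_const_zero] at h1
      have h2 : ((μp:ℝ):ℂ) * (starRingEnd ℂ) s = 0 := h1.symm
      rcases mul_eq_zero.mp h2 with h | h
      · have : μp = 0 := by exact_mod_cast h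
        linarith
      · exact hs0 (by simpa using h)
  obtain ⟨k1, hk1⟩ := eig_mem M hM (c*μp) xp hxpne heqp
  -- eigenvector for c*μm
  set xm : Fin n → ℂ := fun i => ((p1:ℝ):ℂ) * s * z1 i + ((μm - p1 : ℝ):ℂ) * z2 i with hxm
  have hixm1 : hInner z1 xm = ((μm:ℝ):ℂ) * s := by
    rw [hxm, hInner_comb, hz11, ← hsdef]; push_cast; ring
  have hixm2 : hInner z2 xm = ((p1:ℝ):ℂ) * (s * (starRingEnd ℂ) s) + ((μm - p1 : ℝ):ℂ) := by
    rw [hxm, hInner_comb, hz21, hz22]; ring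
  have heqm : ∀ i, M.mulVec xm i = ((c*μm : ℝ):ℂ) * xm i := by
    intro i
    rw [key xm i, hixm1, hixm2, hxm]
    push_cast
    rw [hssC]
    push_cast
    linear_combination (-((c:ℝ):ℂ)*(z2 i))*hQmC
  have hxmne : xm ≠ 0 := by
    intro h0
    by_cases hs0 : s = 0
    · have h1 := hixm2
      rw [h0, hs0] at h1
      simp only [hInner, Pi.zero_apply, mul_zero, Finset.sum_const_zero] at h1
      have h2 : (0:ℂ) = ((μm - p1 : ℝ):ℂ) := by rw [h1]; simp
      have : (0:ℝ) = μm - p1 := by exact_mod_cast h2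
      linarith
    · have h1 := hixm1
      rw [h0] at h1
      simp only [hInner, Pi.zero_apply, mul_zero, Finset.sum_const_zero] at h1
      have h2 : ((μm:ℝ):ℂ) * s = 0 := h1.symm
      rcases mul_eq_zero.mp h2 with h | h
      · have : μm = 0 := by exact_mod_cast h
        linarith
      · exact hs0 h
  obtain ⟨k2, hk2⟩ := eig_mem M hM (c*μm) xm hxmne heqm
  -- t1 is the top eigenvalue
  have hmax : c*μp ≤ t1 := by
    rw [← hk1, ← hσ' k1, ht1def]
    exact hanti (by simp [Fin.le_def])
  have hcμp : 0 < c*μp := mul_pos hc hμp0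
  have hcμm : 0 < c*μm := mul_pos hc hμm0
  have hμmltμp : μm < μp := by rw [hμp, hμm]; linarith
  have ht1 : t1 = c*μp := by
    rcases clas1 with h | h | h
    · exfalso; rw [h] at hmax; linarith
    · exfalso; rw [h] at hmax
      have h2 : μp ≤ μm := le_of_mul_le_mul_left hmax hc
      linarith
    · exact h
  -- t2 is at least c*μm
  have hk12 : k1 ≠ k2 := by
    intro h
    rw [h, hk2] at hk1
    have : μp = μm := by
      have := mul_left_cancel₀ hc.ne' hk1
      linarith
    rw [hμp, hμm] at this; linarith
  have hsecond : c*μm ≤ t2 := by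
    by_cases h : σ.symm k1 = ⟨0, by omega⟩
    · have h2 : σ.symm k2 ≠ ⟨0, by omega⟩ := by
        intro h3
        exact hk12 (σ.symm.injective (h.trans h3.symm))
      have h3 : (⟨1, by omega⟩ : Fin n) ≤ σ.symm k2 := by
        have h4 : ((σ.symm k2 : Fin n) : ℕ) ≠ 0 := fun h5 => h2 (Fin.ext h5)
        simp [Fin.le_def]; omega
      calc c*μm = ev (σ.symm k2) := by rw [hσ' k2, hk2]
        _ ≤ t2 := by rw [ht2def]; exact hanti h3
    · have h3 : (⟨1, by omega⟩ : Fin n) ≤ σ.symm k1 := by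
        have h4 : ((σ.symm k1 : Fin n) : ℕ) ≠ 0 := fun h5 => h (Fin.ext h5)
        simp [Fin.le_def]; omega
      have h5 : c*μp ≤ t2 := by
        calc c*μp = ev (σ.symm k1) := by rw [hσ' k1, hk1]
          _ ≤ t2 := by rw [ht2def]; exact hanti h3
      have : c*μm ≤ c*μp := by
        apply mul_le_mul_of_nonneg_left _ hc.le
        rw [hμp, hμm]; linarith
      linarith
  -- exclude t2 = c*μp
  have ht2 : t2 = c*μm := by
    rcases clas2 with h | h | h
    · exfalso; rw [h] at hsecond; linarith
    · exact h
    · exfalso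
      -- both vt1 and vt2 are eigenvectors for c*μp; contradiction with orthogonality
      have hkr : (0:ℝ) < c*μp - c*p2 := by
        have : c*p2 < c*μp := by
          apply mul_lt_mul_of_pos_left _ hc
          linarith
        linarith
      have hkC : ((c*μp - c*p2 : ℝ):ℂ) ≠ 0 := by exact_mod_cast hkr.ne'
      have E2a' := E2a
      rw [ht1] at E2a'
      have E2b' := E2b
      rw [h] at E2b'
      have RA : ((c*μp - c*p2 : ℝ):ℂ) * u2 = ((c:ℝ):ℂ)*(p1:ℂ)*((starRingEnd ℂ) s * u1) := by
        push_cast at E2a' ⊢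
        linear_combination -E2a'
      have RB : ((c*μp - c*p2 : ℝ):ℂ) * w2 = ((c:ℝ):ℂ)*(p1:ℂ)*((starRingEnd ℂ) s * w1) := by
        push_cast at E2b' ⊢
        linear_combination -E2b'
      have RA' : ((c*μp - c*p2 : ℝ):ℂ) * (starRingEnd ℂ) u2
          = ((c:ℝ):ℂ)*(p1:ℂ)*(s * (starRingEnd ℂ) u1) := by
        have h2 := congrArg (starRingEnd ℂ) RA
        simp only [_root_.map_mul, Complex.conj_conj, Complex.conj_ofReal] at h2
        linear_combination h2
      have comb : (w1 * (starRingEnd ℂ) u1) *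
          ((((c*μp - c*p2 : ℝ):ℂ))^2*((c:ℝ):ℂ)*(p1:ℂ)
            + ((c:ℝ):ℂ)^3*(p1:ℂ)^2*(p2:ℂ)*(s*(starRingEnd ℂ) s)) = 0 := by
        linear_combination (((c*μp - c*p2 : ℝ):ℂ))^2 * CR
          - ((c:ℝ):ℂ)*(p2:ℂ)*(((c:ℝ):ℂ)*(p1:ℂ)*s*(starRingEnd ℂ) u1) * RB
          - ((c:ℝ):ℂ)*(p2:ℂ)*(((c*μp - c*p2 : ℝ):ℂ))*w2 * RA'
      have hfacpos : (0:ℝ) < (c*μp - c*p2)^2*c*p1 + c^3*p1^2*p2*d^2 := by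
        have h1 : (0:ℝ) < (c*μp - c*p2)^2*c*p1 :=
          mul_pos (mul_pos (pow_pos hkr 2) hc) hp1
        have h2 : (0:ℝ) ≤ c^3*p1^2*p2*d^2 :=
          mul_nonneg (mul_nonneg (mul_nonneg (pow_nonneg hc.le 3) (sq_nonneg p1)) hp2.le)
            (sq_nonneg d)
        linarith
      have hfac : ((((c*μp - c*p2 : ℝ):ℂ))^2*((c:ℝ):ℂ)*(p1:ℂ)
          + ((c:ℝ):ℂ)^3*(p1:ℂ)^2*(p2:ℂ)*(s*(starRingEnd ℂ) s)) ≠ 0 := by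
        rw [hssC]
        intro hzero
        have hr : (((c*μp - c*p2)^2*c*p1 + c^3*p1^2*p2*d^2 : ℝ) : ℂ) = 0 := by
          push_cast
          push_cast at hzero
          linear_combination hzero
        have hr2 := Complex.ofReal_eq_zero.mp hr
        linarith
      have hw1u1 : w1 * (starRingEnd ℂ) u1 = 0 := (mul_eq_zero.mp comb).resolve_right hfac
      rcases mul_eq_zero.mp hw1u1 with hz | hz
      · -- w1 = 0 : then w2 = 0 and t2 = 0, contradiction
        have hw2z : w2 = 0 := by
          have h2 : ((c*μp - c*p2 : ℝ):ℂ) * w2 = 0 := by rw [RB, hz]; ring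
          exact (mul_eq_zero.mp h2).resolve_left hkC
        have h3 : ((t2:ℝ):ℂ) = 0 := by rw [← E3b, hz, hw2z]; ring
        have h4 : t2 = 0 := by exact_mod_cast h3
        rw [h4] at h; linarith
      · -- u1 = 0 : then u2 = 0 and t1 = 0, contradiction
        have hu1z : u1 = 0 := by simpa using congrArg (starRingEnd ℂ) hz
        have hu2z : u2 = 0 := by
          have h2 : ((c*μp - c*p2 : ℝ):ℂ) * u2 = 0 := by rw [RA, hu1z]; ring
          exact (mul_eq_zero.mp h2).resolve_left hkC
        have h3 : ((t1:ℝ):ℂ) = 0 := by rw [← E3a, hu1z, hu2z]; ring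
        have h4 : t1 = 0 := by exact_mod_cast h3
        rw [ht1] at h4; linarith
  -- real equations for vt1
  have E3r : c*(p1*‖u1‖^2 + p2*‖u2‖^2) = t1 := by
    have hC : ((c*(p1*‖u1‖^2 + p2*‖u2‖^2) : ℝ):ℂ) = ((t1:ℝ):ℂ) := by
      push_cast
      linear_combination E3a - ((c:ℝ):ℂ)*(p1:ℂ)*(Complex.mul_conj' u1)
        - ((c:ℝ):ℂ)*(p2:ℂ)*(Complex.mul_conj' u2)
    exact_mod_cast hC
  have E3rb : c*(p1*‖w1‖^2 + p2*‖w2‖^2) = t2 := by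
    have hC : ((c*(p1*‖w1‖^2 + p2*‖w2‖^2) : ℝ):ℂ) = ((t2:ℝ):ℂ) := by
      push_cast
      linear_combination E3b - ((c:ℝ):ℂ)*(p1:ℂ)*(Complex.mul_conj' w1)
        - ((c:ℝ):ℂ)*(p2:ℂ)*(Complex.mul_conj' w2)
    exact_mod_cast hC
  have F1 : p1*‖u1‖^2 + p2*‖u2‖^2 = μp := by
    have h2 : c*(p1*‖u1‖^2 + p2*‖u2‖^2) = c*μp := by rw [E3r, ht1]
    exact mul_left_cancel₀ hc.ne' h2
  have F1m : p1*‖w1‖^2 + p2*‖w2‖^2 = μm := by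
    have h2 : c*(p1*‖w1‖^2 + p2*‖w2‖^2) = c*μm := by rw [E3rb, ht2]
    exact mul_left_cancel₀ hc.ne' h2
  -- norm relation for vt1
  have hkr : (0:ℝ) < c*μp - c*p2 := by
    have : c*p2 < c*μp := by
      apply mul_lt_mul_of_pos_left _ hc
      linarith
    linarith
  have RA : ((c*μp - c*p2 : ℝ):ℂ) * u2 = ((c*p1 : ℝ):ℂ)*((starRingEnd ℂ) s * u1) := by
    have E2a' := E2a
    rw [ht1] at E2a'
    push_cast at E2a' ⊢
    linear_combination -E2a'
  have RAn : (c*μp - c*p2) * ‖u2‖ = (c*p1)*(d*‖u1‖) := by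
    have h2 := congrArg norm RA
    simp only [norm_mul, Complex.norm_real, RCLike.norm_conj, Real.norm_eq_abs] at h2
    try rw [abs_of_pos hkr] at h2
    try rw [abs_of_pos (mul_pos hc hp1)] at h2
    try rw [abs_of_pos hc] at h2
    try rw [abs_of_pos hp1] at h2
    rw [← hddef] at h2
    linear_combination h2
  have F2 : (μp - p2)^2*‖u2‖^2 = p1^2*d^2*‖u1‖^2 := by
    have h2 : c^2*((μp - p2)^2*‖u2‖^2) = c^2*(p1^2*d^2*‖u1‖^2) := by
      have h3 := congrArg (fun x => x^2) RAn
      simp only [mul_pow] at h3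
      linear_combination h3
    exact mul_left_cancel₀ (pow_ne_zero 2 hc.ne') h2
  -- norm relation for vt2
  have hkr2 : (0:ℝ) < c*p1 - c*μm := by
    have : c*μm < c*p1 := by
      apply mul_lt_mul_of_pos_left _ hc
      linarith
    linarith
  have RBm : ((c*μm - c*p1 : ℝ):ℂ) * w1 = ((c*p2 : ℝ):ℂ)*(s * w2) := by
    have E1b' := E1b
    rw [ht2] at E1b'
    push_cast at E1b' ⊢
    linear_combination -E1b'
  have RBn : (c*p1 - c*μm) * ‖w1‖ = (c*p2)*(d*‖w2‖) := by
    have h2 := congrArg norm RBm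
    simp only [norm_mul, Complex.norm_real, Real.norm_eq_abs] at h2
    try rw [abs_of_neg (by linarith : c*μm - c*p1 < 0)] at h2
    try rw [abs_of_pos (mul_pos hc hp2)] at h2
    try rw [abs_of_pos hc] at h2
    try rw [abs_of_pos hp2] at h2
    rw [← hddef] at h2
    linear_combination h2
  have F2m : (p1 - μm)^2*‖w1‖^2 = p2^2*d^2*‖w2‖^2 := by
    have h2 : c^2*((p1 - μm)^2*‖w1‖^2) = c^2*(p2^2*d^2*‖w2‖^2) := by
      have h3 := congrArg (fun x => x^2) RBn
      simp only [mul_pow] at h3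
      linear_combination h3
    exact mul_left_cancel₀ (pow_ne_zero 2 hc.ne') h2
  -- key algebraic identities
  have hBr : (μp - p2)^2 + p1*p2*d^2 = (μp - p2)*q := by
    rw [hμp]
    linear_combination (-(1/4))*hq2
  have hBrm : (p1 - μm)^2 + p1*p2*d^2 = (p1 - μm)*q := by
    rw [hμm]
    linear_combination (-(1/4))*hq2
  have hKK' : (p1*‖u1‖^2*q)*(μp - p2) = (μp*(μp - p2))*(μp - p2) := by
    linear_combination (μp - p2)^2*F1 - p2*F2 - (p1*‖u1‖^2)*hBr
  have hKK : p1*‖u1‖^2*q = μp*(μp - p2) := mul_right_cancel₀ hμppos2.ne' hKK'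
  have hKKm' : (p2*‖w2‖^2*q)*(p1 - μm) = (μm*(p1 - μm))*(p1 - μm) := by
    linear_combination (p1 - μm)^2*F1m - p1*F2m - (p2*‖w2‖^2)*hBrm
  have hKKm : p2*‖w2‖^2*q = μm*(p1 - μm) := mul_right_cancel₀ hμmpos1.ne' hKKm'
  have hBq : ‖w2‖^2*q = p1*(1-d^2) - μm := by
    have h2 : p2*(‖w2‖^2*q) = p2*(p1*(1-d^2) - μm) := by
      linear_combination hKKm - hQm
    exact mul_left_cancel₀ hp2.ne' h2
  constructor
  · -- first bound
    rw [hu1]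
    rw [div_le_iff₀ hR0]
    exact bound1 p1 p2 q R (‖u1‖^2) μp hp2 hp12 (sq_nonneg _) hqR hμpp1 hKK
  · -- second bound
    rw [hw2]
    rcases lt_or_ge (p1*(1-δ^2)-p2) 0 with hN | hN
    · exact le_trans (div_nonpos_of_nonpos_of_nonneg hN.le hR0.le) (sq_nonneg _)
    · rw [div_le_iff₀ hR0]
      have hd2 : d^2 ≤ δ^2 := pow_le_pow_left₀ hd0 hdδ 2
      exact bound2 p1 p2 q R (‖w2‖^2) μm d δ hp2 hp12 (sq_nonneg _) hqR hμmp2 hd2 hBq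
end
end

section
/- Let x, y, x̄ ∈ ℂ^n be vectors of unit ℓ₂ norm, and let ε, ε̄ ∈ [0,1] satisfy |⟨x, y⟩|² ≥ 1 − ε and |⟨x̄, y⟩|² ≥ 1 − ε̄. Then |⟨x, x̄⟩|² ≥ 1 − (√ε + √(2ε̄))². -/
open MeasureTheory ProbabilityTheory Complex Matrix
open scoped BigOperators ENNReal

noncomputable section

local notation "⟪" x ", " y "⟫" => @inner ℂ _ _ x y

section Aux

variable {E : Type*} [NormedAddCommGroup E] [InnerProductSpace ℂ E]

lemma aux1 (u v : E) (hu : ‖u‖ = 1) (hv : ‖v‖ = 1) :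
    ‖u - ⟪v, u⟫ • v‖ ^ 2 = 1 - ‖⟪v, u⟫‖ ^ 2 := by
  have := @norm_sub_sq ℂ E _ _ _ u (⟪v, u⟫ • v)
  rw [this, inner_smul_right, ← inner_conj_symm u v, Complex.mul_conj]
  simp [hu, hv, norm_smul, Complex.normSq_eq_norm_sq,
    ← Complex.ofReal_pow]
  ring

lemma aux2 (u w : E) (hu : ‖u‖ = 1) (hw : ‖w‖ = 1) (c : ℂ) :
    Real.sqrt (1 - ‖⟪w, u⟫‖ ^ 2) ≤ ‖u - c • w‖ := by
  have hle : 1 - ‖⟪w, u⟫‖ ^ 2 ≤ ‖u - c • w‖ ^ 2 := by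
    have := @norm_sub_sq ℂ E _ _ _ u (c • w)
    rw [this, inner_smul_right]
    simp only [RCLike.re_to_complex]
    have h1 : Complex.re (c * ⟪u, w⟫) ≤ ‖c‖ * ‖⟪w, u⟫‖ := by
      calc Complex.re (c * ⟪u, w⟫) ≤ ‖c * ⟪u, w⟫‖ := Complex.re_le_norm _
        _ = ‖c‖ * ‖⟪u, w⟫‖ := norm_mul _ _
        _ = ‖c‖ * ‖⟪w, u⟫‖ := by rw [norm_inner_symm]
    have h2 : ‖c • w‖ ^ 2 = ‖c‖ ^ 2 := by simp [norm_smul, hw]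
    nlinarith [sq_nonneg (‖c‖ - ‖⟪w, u⟫‖)]
  calc Real.sqrt (1 - ‖⟪w, u⟫‖ ^ 2) ≤ Real.sqrt (‖u - c • w‖ ^ 2) := Real.sqrt_le_sqrt hle
    _ = ‖u - c • w‖ := Real.sqrt_sq (norm_nonneg _)

lemma sine_triangle (u v w : E) (hu : ‖u‖ = 1) (hv : ‖v‖ = 1) (hw : ‖w‖ = 1) :
    Real.sqrt (1 - ‖⟪w, u⟫‖ ^ 2) ≤
      Real.sqrt (1 - ‖⟪v, u⟫‖ ^ 2) + Real.sqrt (1 - ‖⟪w, v⟫‖ ^ 2) := by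
  have key : ‖u - (⟪v, u⟫ * ⟪w, v⟫) • w‖ ≤
      ‖u - ⟪v, u⟫ • v‖ + ‖v - ⟪w, v⟫ • w‖ := by
    have h3 : u - (⟪v, u⟫ * ⟪w, v⟫) • w =
        (u - ⟪v, u⟫ • v) + ⟪v, u⟫ • (v - ⟪w, v⟫ • w) := by
      rw [smul_sub, mul_smul]; abel
    rw [h3]
    calc ‖(u - ⟪v, u⟫ • v) + ⟪v, u⟫ • (v - ⟪w, v⟫ • w)‖
        ≤ ‖u - ⟪v, u⟫ • v‖ + ‖⟪v, u⟫ • (v - ⟪w, v⟫ • w)‖ := norm_add_le _ _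
      _ ≤ ‖u - ⟪v, u⟫ • v‖ + ‖v - ⟪w, v⟫ • w‖ := by
          gcongr
          rw [norm_smul]
          have : ‖⟪v, u⟫‖ ≤ 1 := by
            have := norm_inner_le_norm (𝕜 := ℂ) v u
            simpa [hu, hv] using this
          nlinarith [norm_nonneg (v - ⟪w, v⟫ • w)]
  have e1 : ‖u - ⟪v, u⟫ • v‖ = Real.sqrt (1 - ‖⟪v, u⟫‖ ^ 2) := by
    rw [← aux1 u v hu hv, Real.sqrt_sq (norm_nonneg _)]
  have e2 : ‖v - ⟪w, v⟫ • w‖ = Real.sqrt (1 - ‖⟪w, v⟫‖ ^ 2) := by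
    rw [← aux1 v w hv hw, Real.sqrt_sq (norm_nonneg _)]
  calc Real.sqrt (1 - ‖⟪w, u⟫‖ ^ 2) ≤ ‖u - (⟪v, u⟫ * ⟪w, v⟫) • w‖ := aux2 u w hu hw _
    _ ≤ _ := by rw [← e1, ← e2]; exact key

end Aux

lemma hInner_eq {n : ℕ} (x y : Fin n → ℂ) :
    hInner x y = ⟪(WithLp.equiv 2 (Fin n → ℂ)).symm x, (WithLp.equiv 2 (Fin n → ℂ)).symm y⟫ := by
  simp [hInner, PiLp.inner_apply, RCLike.inner_apply]
  exact Finset.sum_congr rfl (fun i _ => mul_comm _ _)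

lemma hNorm_eq {n : ℕ} (x : Fin n → ℂ) :
    hNorm x = ‖(WithLp.equiv 2 (Fin n → ℂ)).symm x‖ := by
  rw [EuclideanSpace.norm_eq, hNorm]
  norm_num

/-- Proposition: chained bound on inner products.
If `x, y, x̄` are unit vectors in `ℂ^n` with `|⟨x,y⟩|² ≥ 1 - ε` and `|⟨x̄,y⟩|² ≥ 1 - ε̄`
for `ε, ε̄ ∈ [0,1]`, then `|⟨x,x̄⟩|² ≥ 1 - (√ε + √(2ε̄))²`. -/
theorem stmt6 {n : ℕ} (x y xbar : Fin n → ℂ)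
    (hx : hNorm x = 1) (hy : hNorm y = 1) (hxbar : hNorm xbar = 1)
    (ε εbar : ℝ) (hε : ε ∈ Set.Icc (0:ℝ) 1) (hεbar : εbar ∈ Set.Icc (0:ℝ) 1)
    (h1 : 1 - ε ≤ ‖hInner x y‖ ^ 2)
    (h2 : 1 - εbar ≤ ‖hInner xbar y‖ ^ 2) :
    1 - (Real.sqrt ε + Real.sqrt (2 * εbar)) ^ 2 ≤ ‖hInner x xbar‖ ^ 2 := by
  set X := (WithLp.equiv 2 (Fin n → ℂ)).symm x with hX
  set Y := (WithLp.equiv 2 (Fin n → ℂ)).symm y with hY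
  set Z := (WithLp.equiv 2 (Fin n → ℂ)).symm xbar with hZ
  rw [hNorm_eq] at hx hy hxbar
  rw [hInner_eq] at h1 h2 ⊢
  have tri := sine_triangle Z Y X hxbar hy hx
  have hsym : ‖⟪X, Z⟫‖ = ‖⟪Z, X⟫‖ := norm_inner_symm _ _
  have hc1 : ‖⟪X, Z⟫‖ ≤ 1 := by
    have := norm_inner_le_norm (𝕜 := ℂ) X Z
    rw [show ‖X‖ = 1 from hx, show ‖Z‖ = 1 from hxbar, one_mul] at this; exact this
  have hε0 := hε.1
  have hεb0 := hεbar.1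
  have b1 : Real.sqrt (1 - ‖⟪Y, Z⟫‖ ^ 2) ≤ Real.sqrt (2 * εbar) := by
    apply Real.sqrt_le_sqrt
    have h5 : ‖⟪Y, Z⟫‖ = ‖⟪Z, Y⟫‖ := norm_inner_symm _ _
    rw [h5]
    linarith
  have b2 : Real.sqrt (1 - ‖⟪X, Y⟫‖ ^ 2) ≤ Real.sqrt ε := Real.sqrt_le_sqrt (by linarith)
  have tri' : Real.sqrt (1 - ‖⟪X, Z⟫‖ ^ 2) ≤ Real.sqrt ε + Real.sqrt (2 * εbar) := by
    calc Real.sqrt (1 - ‖⟪X, Z⟫‖ ^ 2)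
        ≤ Real.sqrt (1 - ‖⟪Y, Z⟫‖ ^ 2) + Real.sqrt (1 - ‖⟪X, Y⟫‖ ^ 2) := tri
      _ ≤ Real.sqrt (2 * εbar) + Real.sqrt ε := add_le_add b1 b2
      _ = Real.sqrt ε + Real.sqrt (2 * εbar) := by ring
  have hnn : (0:ℝ) ≤ 1 - ‖⟪X, Z⟫‖ ^ 2 := by nlinarith [norm_nonneg (⟪X, Z⟫)]
  have hsq := Real.sq_sqrt hnn
  nlinarith [Real.sqrt_nonneg (1 - ‖⟪X, Z⟫‖ ^ 2), Real.sqrt_nonneg ε,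
    Real.sqrt_nonneg (2 * εbar), sq_nonneg (Real.sqrt ε + Real.sqrt (2 * εbar))]
end
end
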